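/- For every integer m ≥ 1 there is an identity of polynomials in x: P(m+1,x) + 2·P(m,x) + P(m−1,x) = A₁(m,x). -/

import Mathlib

/-- The polynomial `t(ν,μ,m;x) = ∏_{k=1}^{μ}(x+ν−μ+k) · ∏_{l=1}^{ν}(x−1−μ+l)` (independent of `m`). -/
noncomputable def tPoly (ν μ : ℕ) : Polynomial ℚ :=
  (∏ k ∈ Finset.range μ, (Polynomial.X + Polynomial.C ((ν : ℚ) - (μ : ℚ) + (k : ℚ) + 1))) *
  (∏ l ∈ Finset.range ν, (Polynomial.X + Polynomial.C ((l : ℚ) - (μ : ℚ))))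

/-- `P(m,x) = ∑_{ν,μ=0}^{m−1} t(ν,μ,m;x)·t(m−1−μ,m−1−ν,m;x)/(ν!(m−1−ν)!μ!(m−1−μ)!)`, with `P(0,x)=0`. -/
noncomputable def Ppoly (m : ℕ) : Polynomial ℚ :=
  ∑ ν ∈ Finset.range m, ∑ μ ∈ Finset.range m,
    Polynomial.C (((ν.factorial : ℚ) * ((m - 1 - ν).factorial : ℚ) *
        (μ.factorial : ℚ) * ((m - 1 - μ).factorial : ℚ))⁻¹) *
      (tPoly ν μ * tPoly (m - 1 - μ) (m - 1 - ν))

/-- The polynomial `[x choose k] = x(x−1)⋯(x−k+1)/k!`. -/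
noncomputable def binomPoly (k : ℕ) : Polynomial ℚ :=
  Polynomial.C ((k.factorial : ℚ))⁻¹ *
    ∏ i ∈ Finset.range k, (Polynomial.X - Polynomial.C (i : ℚ))

/-- `a₁(m,x) = ∑_{ν=0}^m [x−1+ν choose ν]·[x choose m−ν]`. -/
noncomputable def a1Poly (m : ℕ) : Polynomial ℚ :=
  ∑ ν ∈ Finset.range (m + 1),
    (binomPoly ν).comp (Polynomial.X + Polynomial.C ((ν : ℚ) - 1)) * binomPoly (m - ν)

/-- `A₁(m,x) = a₁(m,x)²`. -/
noncomputable def A1Poly (m : ℕ) : Polynomial ℚ := (a1Poly m) ^ 2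

open Polynomial Finset

noncomputable def ePoly (ν : ℕ) : Polynomial ℚ :=
  Polynomial.C ((ν.factorial : ℚ))⁻¹ * ∏ l ∈ Finset.range ν, (Polynomial.X + Polynomial.C (l : ℚ))

noncomputable def dP (ν μ : ℕ) : Polynomial ℚ :=
  Polynomial.C ((ν.factorial : ℚ))⁻¹ * Polynomial.C ((μ.factorial : ℚ))⁻¹ * tPoly ν μ

noncomputable def hP : ℕ → ℕ → Polynomial ℚ
  | ν+1, μ+1 => dP ν μ
  | _, _ => 0

lemma hP_zero_left (b : ℕ) : hP 0 b = 0 := by cases b <;> rfl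

lemma hP_zero_right (a : ℕ) : hP a 0 = 0 := by cases a <;> rfl

lemma hP_succ (a b : ℕ) : hP (a+1) (b+1) = dP a b := rfl

lemma ePoly_eq (ν : ℕ) :
    (binomPoly ν).comp (Polynomial.X + Polynomial.C ((ν : ℚ) - 1)) = ePoly ν := by
  unfold binomPoly ePoly
  rw [Polynomial.mul_comp, Polynomial.C_comp, Polynomial.prod_comp]
  congr 1
  calc ∏ i ∈ Finset.range ν, (X - Polynomial.C (i:ℚ)).comp (X + Polynomial.C ((ν:ℚ) - 1))
      = ∏ i ∈ Finset.range ν, (X + Polynomial.C ((ν - 1 - i : ℕ) : ℚ)) := by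
        apply Finset.prod_congr rfl
        intro i hi
        have hi' : i < ν := Finset.mem_range.mp hi
        rw [Polynomial.sub_comp, Polynomial.X_comp, Polynomial.C_comp]
        have : ((ν - 1 - i : ℕ) : ℚ) = (ν : ℚ) - 1 - i := by
          have h : ν - 1 - i = ν - (1 + i) := by omega
          rw [h, Nat.cast_sub (by omega : 1 + i ≤ ν)]
          push_cast; ring
        rw [this]; simp only [Polynomial.C_sub]; ring
    _ = ∏ l ∈ Finset.range ν, (X + Polynomial.C (l : ℚ)) :=
        Finset.prod_range_reflect (fun l => X + Polynomial.C (l:ℚ)) ν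

lemma tPoly_succ (ν μ : ℕ) :
    tPoly (ν+1) (μ+1) =
      (X - Polynomial.C ((μ:ℚ)+1)) * (X + Polynomial.C ((ν:ℚ)+1)) * tPoly ν μ := by
  unfold tPoly
  rw [Finset.prod_range_succ, Finset.prod_range_succ']
  have h1 : (∏ k ∈ Finset.range μ, (X + Polynomial.C (((ν+1:ℕ):ℚ) - ((μ+1:ℕ):ℚ) + (k:ℚ) + 1)))
      = ∏ k ∈ Finset.range μ, (X + Polynomial.C ((ν:ℚ) - (μ:ℚ) + (k:ℚ) + 1)) := by
    apply Finset.prod_congr rfl; intro k _; congr 1; push_cast; ring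
  have h2 : (∏ l ∈ Finset.range ν, (X + Polynomial.C (((l+1:ℕ):ℚ) - ((μ+1:ℕ):ℚ))))
      = ∏ l ∈ Finset.range ν, (X + Polynomial.C ((l:ℚ) - (μ:ℚ))) := by
    apply Finset.prod_congr rfl; intro l _; congr 1; push_cast; ring
  rw [h1, h2]
  have h3 : X + Polynomial.C (((ν+1:ℕ):ℚ) - ((μ+1:ℕ):ℚ) + (μ:ℚ) + 1)
      = X + Polynomial.C ((ν:ℚ) + 1) := by congr 1; push_cast; ring
  have h4 : X + Polynomial.C (((0:ℕ):ℚ) - ((μ+1:ℕ):ℚ)) = X - Polynomial.C ((μ:ℚ)+1) := by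
    rw [show ((0:ℕ):ℚ) - ((μ+1:ℕ):ℚ) = -((μ:ℚ)+1) by push_cast; ring, Polynomial.C_neg]
    ring
  rw [h3, h4]
  ring

lemma tPoly_U (ν μ : ℕ) :
    (X + Polynomial.C ((ν:ℚ) - (μ:ℚ))) * tPoly ν μ
      = ∏ j ∈ Finset.range (ν + 1 + μ), (X + Polynomial.C ((j:ℚ) - (μ:ℚ))) := by
  rw [Finset.prod_range_add, Finset.prod_range_succ]
  unfold tPoly
  have h1 : (∏ k ∈ Finset.range μ, (X + Polynomial.C (((ν+1+k:ℕ):ℚ) - (μ:ℚ))))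
      = ∏ k ∈ Finset.range μ, (X + Polynomial.C ((ν:ℚ) - (μ:ℚ) + (k:ℚ) + 1)) := by
    apply Finset.prod_congr rfl; intro k _; congr 1; push_cast; ring
  rw [h1]
  ring

lemma EF_eq (ν μ : ℕ) :
    (∏ l ∈ Finset.range (ν+1), (X + Polynomial.C (l : ℚ))) *
      (∏ i ∈ Finset.range (μ+1), (X - Polynomial.C (i : ℚ)))
    = X * ((X + Polynomial.C ((ν:ℚ) - (μ:ℚ))) * tPoly ν μ) := by
  have hE : (∏ l ∈ Finset.range (ν+1), (X + Polynomial.C (l : ℚ)))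
      = (∏ k ∈ Finset.range ν, (X + Polynomial.C (((μ+1+k:ℕ):ℚ) - (μ:ℚ)))) * X := by
    rw [Finset.prod_range_succ']
    have h : (∏ k ∈ Finset.range ν, (X + Polynomial.C (((μ+1+k:ℕ):ℚ) - (μ:ℚ))))
        = ∏ k ∈ Finset.range ν, (X + Polynomial.C (((k+1:ℕ):ℚ))) := by
      apply Finset.prod_congr rfl; intro k _; congr 1; push_cast; ring
    rw [h]
    simp
  have hF : (∏ i ∈ Finset.range (μ+1), (X - Polynomial.C (i : ℚ)))
      = ∏ j ∈ Finset.range (μ+1), (X + Polynomial.C ((j:ℚ) - (μ:ℚ))) := by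
    calc (∏ i ∈ Finset.range (μ+1), (X - Polynomial.C (i : ℚ)))
        = ∏ j ∈ Finset.range (μ+1), (X + Polynomial.C (((μ+1-1-j:ℕ):ℚ) - (μ:ℚ))) := by
          apply Finset.prod_congr rfl
          intro j hj
          have hj' : j < μ + 1 := Finset.mem_range.mp hj
          rw [show ((μ+1-1-j:ℕ):ℚ) - (μ:ℚ) = -(j:ℚ) by
            rw [Nat.cast_sub (by omega : j ≤ μ+1-1)]; push_cast; ring]
          rw [Polynomial.C_neg]; ring
      _ = ∏ j ∈ Finset.range (μ+1), (X + Polynomial.C ((j:ℚ) - (μ:ℚ))) :=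
          Finset.prod_range_reflect (fun j => X + Polynomial.C ((j:ℚ) - (μ:ℚ))) (μ+1)
  have hsplit := Finset.prod_range_add (fun j : ℕ => X + Polynomial.C ((j:ℚ) - (μ:ℚ))) (μ+1) ν
  rw [hE, hF, tPoly_U, show ν + 1 + μ = μ + 1 + ν from by omega, hsplit]
  ring

lemma starS (ν μ : ℕ) :
    dP (ν+1) (μ+1) + dP ν μ = ePoly (ν+1) * binomPoly (μ+1) := by
  unfold dP ePoly binomPoly
  rw [tPoly_succ]
  have key : (∏ l ∈ Finset.range (ν+1), (X + Polynomial.C (l : ℚ))) *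
      (∏ i ∈ Finset.range (μ+1), (X - Polynomial.C (i : ℚ)))
      = X * ((X + Polynomial.C ((ν:ℚ) - (μ:ℚ))) * tPoly ν μ) := EF_eq ν μ
  have hfac : Polynomial.C ((ν.factorial : ℚ))⁻¹ * Polynomial.C ((μ.factorial : ℚ))⁻¹
      = Polynomial.C (((ν+1).factorial : ℚ))⁻¹ * Polynomial.C (((μ+1).factorial : ℚ))⁻¹ *
        Polynomial.C (((ν:ℚ)+1) * ((μ:ℚ)+1)) := by
    rw [← Polynomial.C_mul, ← Polynomial.C_mul, ← Polynomial.C_mul]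
    congr 1
    rw [Nat.factorial_succ, Nat.factorial_succ]
    push_cast
    have hν : ((ν.factorial : ℚ)) ≠ 0 := Nat.cast_ne_zero.mpr (Nat.factorial_ne_zero ν)
    have hμ : ((μ.factorial : ℚ)) ≠ 0 := Nat.cast_ne_zero.mpr (Nat.factorial_ne_zero μ)
    field_simp
  rw [hfac]
  have poly_id : (X - Polynomial.C ((μ:ℚ)+1)) * (X + Polynomial.C ((ν:ℚ)+1)) +
      Polynomial.C (((ν:ℚ)+1) * ((μ:ℚ)+1)) = X * (X + Polynomial.C ((ν:ℚ) - (μ:ℚ))) := by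
    simp only [Polynomial.C_mul, Polynomial.C_add, Polynomial.C_sub, Polynomial.C_1]
    ring
  calc Polynomial.C (((ν+1).factorial : ℚ))⁻¹ * Polynomial.C (((μ+1).factorial : ℚ))⁻¹ *
        ((X - Polynomial.C ((μ:ℚ)+1)) * (X + Polynomial.C ((ν:ℚ)+1)) * tPoly ν μ) +
      Polynomial.C (((ν+1).factorial : ℚ))⁻¹ * Polynomial.C (((μ+1).factorial : ℚ))⁻¹ *
        Polynomial.C (((ν:ℚ)+1) * ((μ:ℚ)+1)) * tPoly ν μ
      = Polynomial.C (((ν+1).factorial : ℚ))⁻¹ * Polynomial.C (((μ+1).factorial : ℚ))⁻¹ *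
        (((X - Polynomial.C ((μ:ℚ)+1)) * (X + Polynomial.C ((ν:ℚ)+1)) +
          Polynomial.C (((ν:ℚ)+1) * ((μ:ℚ)+1))) * tPoly ν μ) := by ring
    _ = Polynomial.C (((ν+1).factorial : ℚ))⁻¹ * Polynomial.C (((μ+1).factorial : ℚ))⁻¹ *
        (X * ((X + Polynomial.C ((ν:ℚ) - (μ:ℚ))) * tPoly ν μ)) := by rw [poly_id]; ring
    _ = Polynomial.C (((ν+1).factorial : ℚ))⁻¹ * Polynomial.C (((μ+1).factorial : ℚ))⁻¹ *
        ((∏ l ∈ Finset.range (ν+1), (X + Polynomial.C (l : ℚ))) *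
         (∏ i ∈ Finset.range (μ+1), (X - Polynomial.C (i : ℚ)))) := by rw [key]
    _ = Polynomial.C (((ν+1).factorial : ℚ))⁻¹ *
          (∏ l ∈ Finset.range (ν+1), (X + Polynomial.C (l : ℚ))) *
        (Polynomial.C (((μ+1).factorial : ℚ))⁻¹ *
          ∏ i ∈ Finset.range (μ+1), (X - Polynomial.C (i : ℚ))) := by ring

lemma starAll (ν μ : ℕ) : ePoly ν * binomPoly μ = dP ν μ + hP ν μ := by
  match ν, μ with
  | 0, 0 => simp [ePoly, binomPoly, dP, hP, tPoly]
  | 0, μ+1 =>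
    rw [hP_zero_left, add_zero]
    unfold ePoly binomPoly dP tPoly
    simp only [Nat.factorial_zero, Nat.cast_one, inv_one, Polynomial.C_1, one_mul,
      Finset.range_zero, Finset.prod_empty, mul_one]
    congr 1
    calc (∏ i ∈ Finset.range (μ+1), (X - Polynomial.C (i : ℚ)))
        = ∏ k ∈ Finset.range (μ+1), (X + Polynomial.C (((0:ℕ):ℚ) - ((μ+1:ℕ):ℚ) + (((μ+1-1-k:ℕ)):ℚ) + 1)) := by
          apply Finset.prod_congr rfl
          intro k hk
          have hk' : k < μ + 1 := Finset.mem_range.mp hk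
          rw [show ((0:ℕ):ℚ) - ((μ+1:ℕ):ℚ) + (((μ+1-1-k:ℕ)):ℚ) + 1 = -(k:ℚ) by
            rw [Nat.cast_sub (by omega : k ≤ μ+1-1)]; push_cast; ring]
          rw [Polynomial.C_neg]; ring
      _ = ∏ k ∈ Finset.range (μ+1), (X + Polynomial.C (((0:ℕ):ℚ) - ((μ+1:ℕ):ℚ) + (k:ℚ) + 1)) :=
          Finset.prod_range_reflect (fun k => X + Polynomial.C (((0:ℕ):ℚ) - ((μ+1:ℕ):ℚ) + (k:ℚ) + 1)) (μ+1)
  | ν+1, 0 =>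
    rw [hP_zero_right, add_zero]
    unfold ePoly binomPoly dP tPoly
    simp only [Nat.factorial_zero, Nat.cast_one, inv_one, Polynomial.C_1, one_mul,
      Finset.range_zero, Finset.prod_empty, mul_one, Nat.cast_zero, sub_zero, Nat.cast_ofNat]
  | ν+1, μ+1 =>
    rw [hP_succ, ← starS]

lemma Ppoly_eq (m : ℕ) :
    Ppoly m = ∑ ν ∈ Finset.range m, ∑ μ ∈ Finset.range m,
      dP ν μ * dP (m - 1 - μ) (m - 1 - ν) := by
  unfold Ppoly dP
  apply Finset.sum_congr rfl
  intro ν _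
  apply Finset.sum_congr rfl
  intro μ _
  simp only [mul_inv, Polynomial.C_mul]
  ring

lemma S2_eq (n : ℕ) :
    (∑ ν ∈ Finset.range (n+2), ∑ μ ∈ Finset.range (n+2),
      dP ν μ * hP (n+1-μ) (n+1-ν)) = Ppoly (n+1) := by
  rw [Ppoly_eq]
  rw [Finset.sum_range_succ]
  have hlast : (∑ μ ∈ Finset.range (n+2), dP (n+1) μ * hP (n+1-μ) (n+1-(n+1))) = 0 := by
    apply Finset.sum_eq_zero
    intro μ _
    rw [show n+1-(n+1) = 0 from by omega, hP_zero_right, mul_zero]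
  rw [hlast, add_zero]
  apply Finset.sum_congr rfl
  intro ν hν
  have hν' : ν < n + 1 := Finset.mem_range.mp hν
  rw [Finset.sum_range_succ]
  have h2 : dP ν (n+1) * hP (n+1-(n+1)) (n+1-ν) = 0 := by
    rw [show n+1-(n+1) = 0 from by omega, hP_zero_left, mul_zero]
  rw [h2, add_zero]
  apply Finset.sum_congr rfl
  intro μ hμ
  have hμ' : μ < n + 1 := Finset.mem_range.mp hμ
  rw [show n+1-μ = (n-μ)+1 from by omega, show n+1-ν = (n-ν)+1 from by omega, hP_succ,
    show n+1-1-μ = n-μ from by omega, show n+1-1-ν = n-ν from by omega]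

lemma S3_eq (n : ℕ) :
    (∑ ν ∈ Finset.range (n+2), ∑ μ ∈ Finset.range (n+2),
      hP ν μ * dP (n+1-μ) (n+1-ν)) = Ppoly (n+1) := by
  rw [Ppoly_eq]
  rw [Finset.sum_range_succ']
  have h0 : (∑ μ ∈ Finset.range (n+2), hP 0 μ * dP (n+1-μ) (n+1-0)) = 0 := by
    apply Finset.sum_eq_zero
    intro μ _
    rw [hP_zero_left, zero_mul]
  rw [h0, add_zero]
  apply Finset.sum_congr rfl
  intro ν hν
  have hν' : ν < n + 1 := Finset.mem_range.mp hν
  rw [Finset.sum_range_succ']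
  have h1 : hP (ν+1) 0 * dP (n+1-0) (n+1-(ν+1)) = 0 := by
    rw [hP_zero_right, zero_mul]
  rw [h1, add_zero]
  apply Finset.sum_congr rfl
  intro μ hμ
  have hμ' : μ < n + 1 := Finset.mem_range.mp hμ
  rw [hP_succ, show n+1-(μ+1) = n-μ from by omega, show n+1-(ν+1) = n-ν from by omega,
    show n+1-1-μ = n-μ from by omega, show n+1-1-ν = n-ν from by omega]

lemma S4_eq (n : ℕ) :
    (∑ ν ∈ Finset.range (n+2), ∑ μ ∈ Finset.range (n+2),
      hP ν μ * hP (n+1-μ) (n+1-ν)) = Ppoly n := by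
  rw [Ppoly_eq]
  rw [Finset.sum_range_succ']
  have h0 : (∑ μ ∈ Finset.range (n+2), hP 0 μ * hP (n+1-μ) (n+1-0)) = 0 := by
    apply Finset.sum_eq_zero
    intro μ _
    rw [hP_zero_left, zero_mul]
  rw [h0, add_zero]
  -- now sum over ν' ∈ range (n+1) of hP (ν'+1) μ * hP (n+1-μ) (n-ν')
  rw [Finset.sum_range_succ]
  have htop : (∑ μ ∈ Finset.range (n+2), hP (n+1) μ * hP (n+1-μ) (n+1-(n+1))) = 0 := by
    apply Finset.sum_eq_zero
    intro μ _
    rw [show n+1-(n+1) = 0 from by omega, hP_zero_right, mul_zero]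
  rw [htop, add_zero]
  apply Finset.sum_congr rfl
  intro ν hν
  have hν' : ν < n := Finset.mem_range.mp hν
  rw [Finset.sum_range_succ']
  have h1 : hP (ν+1) 0 * hP (n+1-0) (n+1-(ν+1)) = 0 := by
    rw [hP_zero_right, zero_mul]
  rw [h1, add_zero]
  rw [Finset.sum_range_succ]
  have h2 : hP (ν+1) (n+1) * hP (n+1-(n+1)) (n+1-(ν+1)) = 0 := by
    rw [show n+1-(n+1) = 0 from by omega, hP_zero_left, mul_zero]
  rw [h2, add_zero]
  apply Finset.sum_congr rfl
  intro μ hμ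
  have hμ' : μ < n := Finset.mem_range.mp hμ
  rw [hP_succ, show n+1-(μ+1) = (n-1-μ)+1 from by omega,
    show n+1-(ν+1) = (n-1-ν)+1 from by omega, hP_succ]

/-- For every `m ≥ 1`, `P(m+1,x) + 2·P(m,x) + P(m−1,x) = A₁(m,x)` as polynomials. -/
theorem stmt5 : ∀ m : ℕ, 1 ≤ m →
    Ppoly (m + 1) + 2 * Ppoly m + Ppoly (m - 1) = A1Poly m := by
  intro m hm
  obtain ⟨n, rfl⟩ : ∃ n, m = n + 1 := ⟨m - 1, by omega⟩
  have ha1 : a1Poly (n+1) = ∑ ν ∈ Finset.range (n+2), ePoly ν * binomPoly (n+1-ν) := by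
    unfold a1Poly
    apply Finset.sum_congr rfl
    intro ν _
    rw [ePoly_eq]
  have hrefl : (∑ j ∈ Finset.range (n+2), ePoly (n+1-j) * binomPoly j)
      = ∑ ν ∈ Finset.range (n+2), ePoly ν * binomPoly (n+1-ν) := by
    calc (∑ j ∈ Finset.range (n+2), ePoly (n+1-j) * binomPoly j)
        = ∑ j ∈ Finset.range (n+2), ePoly (n+2-1-j) * binomPoly (n+1-(n+2-1-j)) := by
          apply Finset.sum_congr rfl
          intro j hj
          have hj' : j < n + 2 := Finset.mem_range.mp hj
          rw [show n+2-1-j = n+1-j from by omega, show n+1-(n+1-j) = j from by omega]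
      _ = ∑ ν ∈ Finset.range (n+2), ePoly ν * binomPoly (n+1-ν) :=
          Finset.sum_range_reflect (fun j => ePoly j * binomPoly (n+1-j)) (n+2)
  have key : A1Poly (n+1) = ∑ ν ∈ Finset.range (n+2), ∑ μ ∈ Finset.range (n+2),
      (dP ν μ + hP ν μ) * (dP (n+1-μ) (n+1-ν) + hP (n+1-μ) (n+1-ν)) := by
    unfold A1Poly
    rw [ha1, pow_two]
    nth_rewrite 2 [← hrefl]
    rw [Finset.sum_mul_sum]
    apply Finset.sum_congr rfl
    intro ν _
    apply Finset.sum_congr rfl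
    intro μ _
    calc (ePoly ν * binomPoly (n+1-ν)) * (ePoly (n+1-μ) * binomPoly μ)
        = (ePoly ν * binomPoly μ) * (ePoly (n+1-μ) * binomPoly (n+1-ν)) := by ring
      _ = (dP ν μ + hP ν μ) * (dP (n+1-μ) (n+1-ν) + hP (n+1-μ) (n+1-ν)) := by
          rw [starAll, starAll]
  have hS1 : (∑ ν ∈ Finset.range (n+2), ∑ μ ∈ Finset.range (n+2),
      dP ν μ * dP (n+1-μ) (n+1-ν)) = Ppoly (n+2) := by
    rw [Ppoly_eq]
    apply Finset.sum_congr rfl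
    intro ν _
    apply Finset.sum_congr rfl
    intro μ _
    rw [show n+2-1-μ = n+1-μ from by omega, show n+2-1-ν = n+1-ν from by omega]
  rw [key]
  calc Ppoly (n+1+1) + 2 * Ppoly (n+1) + Ppoly (n+1-1)
      = Ppoly (n+2) + (Ppoly (n+1) + (Ppoly (n+1) + Ppoly n)) := by
        rw [show n+1+1 = n+2 from rfl, show n+1-1 = n from rfl]; ring
    _ = (∑ ν ∈ Finset.range (n+2), ∑ μ ∈ Finset.range (n+2), dP ν μ * dP (n+1-μ) (n+1-ν))
        + ((∑ ν ∈ Finset.range (n+2), ∑ μ ∈ Finset.range (n+2), dP ν μ * hP (n+1-μ) (n+1-ν))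
        + ((∑ ν ∈ Finset.range (n+2), ∑ μ ∈ Finset.range (n+2), hP ν μ * dP (n+1-μ) (n+1-ν))
        + (∑ ν ∈ Finset.range (n+2), ∑ μ ∈ Finset.range (n+2), hP ν μ * hP (n+1-μ) (n+1-ν)))) := by
        rw [hS1, S2_eq, S3_eq, S4_eq]
    _ = ∑ ν ∈ Finset.range (n+2), ∑ μ ∈ Finset.range (n+2),
        (dP ν μ * dP (n+1-μ) (n+1-ν) + (dP ν μ * hP (n+1-μ) (n+1-ν)
          + (hP ν μ * dP (n+1-μ) (n+1-ν) + hP ν μ * hP (n+1-μ) (n+1-ν)))) := by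
        simp only [Finset.sum_add_distrib]
    _ = ∑ ν ∈ Finset.range (n+2), ∑ μ ∈ Finset.range (n+2),
        (dP ν μ + hP ν μ) * (dP (n+1-μ) (n+1-ν) + hP (n+1-μ) (n+1-ν)) := by
        apply Finset.sum_congr rfl
        intro ν _
        apply Finset.sum_congr rfl
        intro μ _
        ring
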